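/- arXiv:1402.5607 — 2 statements merged into one kernel-verified Lean document; each statement's English description precedes it below -/
import Mathlib

section
/- For d finite sequences of random variables X_k^{(i)}, 1 ≤ k ≤ n, 1 ≤ i ≤ d, and constants u^{(1)},...,u^{(d)}, the probability of the union over i of {max_{1≤k≤n} X_k^{(i)} > u^{(i)}} equals Σ_{k=1}^n P(X_k^{(1)} > u^{(1)}, and M_{k,n}^{(t)} ≤ u^{(t)} for all 1 ≤ t ≤ d) plus Σ_{i=2}^d Σ_{k=1}^n P(X_k^{(i)} > u^{(i)}, M_{k-1,n}^{(s)} ≤ u^{(s)} for all 1 ≤ s ≤ i-1, and M_{k,n}^{(t)} ≤ u^{(t)} for all i ≤ t ≤ d). -/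
open MeasureTheory Finset

theorem multivariate_max_union_decomposition {Ω : Type*} [MeasureSpace Ω]
    (hP : IsProbabilityMeasure (volume : Measure Ω))
    (d n : ℕ) (hd : 1 ≤ d) (hn : 1 ≤ n)
    (X : ℕ → ℕ → Ω → ℝ) (hX : ∀ i k, Measurable (X i k)) (u : ℕ → ℝ) :
    volume {ω : Ω | ∃ i ∈ Finset.Icc 1 d, ∃ k ∈ Finset.Icc 1 n, u i < X i k ω} =
      (∑ k ∈ Finset.Icc 1 n,
        volume {ω : Ω | u 1 < X 1 k ω ∧ ∀ t ∈ Finset.Icc 1 d, ∀ j ∈ Finset.Ioc k n, X t j ω ≤ u t})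
      + ∑ i ∈ Finset.Icc 2 d, ∑ k ∈ Finset.Icc 1 n,
        volume {ω : Ω | u i < X i k ω
          ∧ (∀ s ∈ Finset.Icc 1 (i - 1), ∀ j ∈ Finset.Icc k n, X s j ω ≤ u s)
          ∧ ∀ t ∈ Finset.Icc i d, ∀ j ∈ Finset.Ioc k n, X t j ω ≤ u t} := by
  set A : ℕ → ℕ → Set Ω := fun i k =>
    {ω : Ω | u i < X i k ω
      ∧ (∀ s ∈ Finset.Icc 1 (i - 1), ∀ j ∈ Finset.Icc k n, X s j ω ≤ u s)
      ∧ ∀ t ∈ Finset.Icc i d, ∀ j ∈ Finset.Ioc k n, X t j ω ≤ u t} with hA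
  have hAm : ∀ i k, MeasurableSet (A i k) := by
    intro i k
    have : A i k = {ω | u i < X i k ω}
        ∩ (⋂ s ∈ Finset.Icc 1 (i - 1), ⋂ j ∈ Finset.Icc k n, {ω | X s j ω ≤ u s})
        ∩ (⋂ t ∈ Finset.Icc i d, ⋂ j ∈ Finset.Ioc k n, {ω | X t j ω ≤ u t}) := by
      ext ω
      simp only [hA, Set.mem_setOf_eq, Set.mem_inter_iff, Set.mem_iInter, and_assoc]
    rw [this]
    refine ((measurableSet_lt measurable_const (hX i k)).inter ?_).inter ?_ <;>
      exact MeasurableSet.biInter (Set.to_countable _) fun s _ =>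
        MeasurableSet.biInter (Set.to_countable _) fun j _ =>
          measurableSet_le (hX _ _) measurable_const
  -- the sets A i k for (i, k) in Icc 1 d ×ˢ Icc 1 n cover the union
  have hcover : {ω : Ω | ∃ i ∈ Finset.Icc 1 d, ∃ k ∈ Finset.Icc 1 n, u i < X i k ω}
      = ⋃ p ∈ (Finset.Icc 1 d ×ˢ Finset.Icc 1 n : Finset (ℕ × ℕ)), A p.1 p.2 := by
    ext ω
    simp only [Set.mem_setOf_eq, Set.mem_iUnion, Finset.mem_product, exists_prop]
    constructor
    · rintro ⟨i, hi, k, hk, hik⟩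
      haveI : DecidablePred (fun j => ∃ t ∈ Finset.Icc 1 d, u t < X t j ω) :=
        fun _ => Classical.propDecidable _
      set T := (Finset.Icc 1 n).filter (fun j => ∃ t ∈ Finset.Icc 1 d, u t < X t j ω) with hT
      have hTne : T.Nonempty := ⟨k, Finset.mem_filter.mpr ⟨hk, ⟨i, hi, hik⟩⟩⟩
      set K := T.max' hTne with hK
      have hKT : K ∈ T := T.max'_mem hTne
      obtain ⟨hKn, hKex⟩ := Finset.mem_filter.mp hKT
      haveI : DecidablePred (fun t => u t < X t K ω) := fun _ => Classical.propDecidable _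
      set S := (Finset.Icc 1 d).filter (fun t => u t < X t K ω) with hS
      have hSne : S.Nonempty := by
        obtain ⟨t, ht, ht'⟩ := hKex
        exact ⟨t, Finset.mem_filter.mpr ⟨ht, ht'⟩⟩
      set I := S.min' hSne with hI
      have hIS : I ∈ S := S.min'_mem hSne
      obtain ⟨hId, hIlt⟩ := Finset.mem_filter.mp hIS
      rw [Finset.mem_Icc] at hKn hId
      refine ⟨(I, K), ⟨Finset.mem_Icc.mpr hId, Finset.mem_Icc.mpr hKn⟩, ?_, ?_, ?_⟩
      · exact hIlt
      · intro s hs j hj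
        rw [Finset.mem_Icc] at hs hj
        by_contra hcon
        push_neg at hcon
        have hjT : j ∈ T := by
          refine Finset.mem_filter.mpr ⟨Finset.mem_Icc.mpr ⟨le_trans hKn.1 hj.1, hj.2⟩,
            s, Finset.mem_Icc.mpr ⟨hs.1, ?_⟩, hcon⟩
          omega
        have hjK : j ≤ K := Finset.le_max' _ _ hjT
        have hjeq : j = K := le_antisymm hjK hj.1
        subst hjeq
        have : I ≤ s := Finset.min'_le _ _ (Finset.mem_filter.mpr
          ⟨Finset.mem_Icc.mpr ⟨hs.1, by omega⟩, hcon⟩)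
        omega
      · intro t ht j hj
        rw [Finset.mem_Icc] at ht
        rw [Finset.mem_Ioc] at hj
        by_contra hcon
        push_neg at hcon
        have hjT : j ∈ T := Finset.mem_filter.mpr
          ⟨Finset.mem_Icc.mpr ⟨by omega, hj.2⟩,
            t, Finset.mem_Icc.mpr ⟨le_trans hId.1 ht.1, ht.2⟩, hcon⟩
        have : j ≤ K := Finset.le_max' _ _ hjT
        omega
    · rintro ⟨⟨i, k⟩, ⟨hi, hk⟩, h1, _, _⟩
      exact ⟨i, hi, k, hk, h1⟩
  -- disjointness
  have hdisj : ((Finset.Icc 1 d ×ˢ Finset.Icc 1 n : Finset (ℕ × ℕ)) : Set (ℕ × ℕ)).PairwiseDisjoint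
      (fun p => A p.1 p.2) := by
    -- key: if ω is in both A i k and A i' k' (with indices in range), then k' ≤ k and then i' = i
    have key : ∀ ω i k i' k', i ∈ Finset.Icc 1 d → k ∈ Finset.Icc 1 n →
        i' ∈ Finset.Icc 1 d → k' ∈ Finset.Icc 1 n →
        ω ∈ A i k → ω ∈ A i' k' → k' ≤ k := by
      intro ω i k i' k' hi hk hi' hk' hm hm'
      rw [Finset.mem_Icc] at hi hk hi' hk'
      by_contra hcon
      push_neg at hcon  -- k < k'
      obtain ⟨h1, h2, h3⟩ := hm
      obtain ⟨h1', _, _⟩ := hm'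
      rcases le_or_gt i i' with hii | hii
      · exact absurd h1' (not_lt.mpr (h3 i' (Finset.mem_Icc.mpr ⟨hii, hi'.2⟩) k'
          (Finset.mem_Ioc.mpr ⟨hcon, hk'.2⟩)))
      · exact absurd h1' (not_lt.mpr (h2 i' (Finset.mem_Icc.mpr ⟨hi'.1, by omega⟩) k'
          (Finset.mem_Icc.mpr ⟨le_of_lt hcon, hk'.2⟩)))
    intro p hp q hq hpq
    simp only [Finset.coe_product, Set.mem_prod, Finset.mem_coe] at hp hq
    rw [Function.onFun, Set.disjoint_left]
    intro ω hωp hωq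
    obtain ⟨i, k⟩ := p
    obtain ⟨i', k'⟩ := q
    obtain ⟨hi, hk⟩ := hp
    obtain ⟨hi', hk'⟩ := hq
    have hkk : k = k' := le_antisymm (key ω i' k' i k hi' hk' hi hk hωq hωp)
      (key ω i k i' k' hi hk hi' hk' hωp hωq)
    subst hkk
    have hii : i = i' := by
      by_contra hne
      rcases lt_or_gt_of_ne hne with h | h
      · obtain ⟨h1, _, _⟩ := hωp
        obtain ⟨_, h2', _⟩ := hωq
        exact absurd h1 (not_lt.mpr (h2' i (Finset.mem_Icc.mpr
          ⟨(Finset.mem_Icc.mp hi).1, by omega⟩) k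
          (Finset.mem_Icc.mpr ⟨le_refl k, (Finset.mem_Icc.mp hk).2⟩)))
      · obtain ⟨_, h2, _⟩ := hωp
        obtain ⟨h1', _, _⟩ := hωq
        exact absurd h1' (not_lt.mpr (h2 i' (Finset.mem_Icc.mpr
          ⟨(Finset.mem_Icc.mp hi').1, by omega⟩) k
          (Finset.mem_Icc.mpr ⟨le_refl k, (Finset.mem_Icc.mp hk).2⟩)))
    exact hpq (by simp [hii])
  rw [hcover, measure_biUnion_finset hdisj (fun p _ => hAm p.1 p.2), Finset.sum_product]
  have h10 : Finset.Icc 1 0 = (∅ : Finset ℕ) := by decide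
  have hone : ∀ k, A 1 k = {ω : Ω | u 1 < X 1 k ω
      ∧ ∀ t ∈ Finset.Icc 1 d, ∀ j ∈ Finset.Ioc k n, X t j ω ≤ u t} := by
    intro k; ext ω
    constructor
    · rintro ⟨h1, -, h3⟩; exact ⟨h1, h3⟩
    · rintro ⟨h1, h3⟩
      exact ⟨h1, fun s hs => absurd hs (by simp [h10]), h3⟩
  have hsplit : Finset.Icc 1 d = insert 1 (Finset.Icc 2 d) := by
    ext x; simp only [Finset.mem_Icc, Finset.mem_insert]; omega
  conv_lhs => rw [hsplit]
  rw [Finset.sum_insert (by simp)]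
  simp only [hone]
  rfl
end

section
/- Suppose ρ : ℕ → [−1, 1] with ρ(n) → 1 and (1 − ρ(n)) ln n → λ ∈ (0, ∞) as n → ∞. Let u_n(x) = x/√(2 ln n) + √(2 ln n) − (ln ln n + ln(4π))/(2√(2 ln n)). Then for fixed x, y ∈ ℝ, (u_n(y) − ρ(n) u_n(x)) / √(1 − ρ(n)²) → √λ + (y − x)/(2√λ) as n → ∞. -/
/-- The Gaussian normalizing levels `u_n(x) = x/a_n + b_n`. -/
noncomputable def un (n : ℕ) (x : ℝ) : ℝ :=
  x / Real.sqrt (2 * Real.log n) + Real.sqrt (2 * Real.log n)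
    - (Real.log (Real.log n) + Real.log (4 * Real.pi)) / (2 * Real.sqrt (2 * Real.log n))

theorem husler_reiss_threshold_limit (ρ : ℕ → ℝ) (hρ : ∀ n, ρ n ∈ Set.Icc (-1 : ℝ) 1)
    (hρ1 : Filter.Tendsto ρ Filter.atTop (nhds 1))
    (lam : ℝ) (hlam : 0 < lam)
    (hHR : Filter.Tendsto (fun n : ℕ => (1 - ρ n) * Real.log n) Filter.atTop (nhds lam))
    (x y : ℝ) :
    Filter.Tendsto
      (fun n : ℕ => (un n y - ρ n * un n x) / Real.sqrt (1 - (ρ n) ^ 2))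
      Filter.atTop (nhds (Real.sqrt lam + (y - x) / (2 * Real.sqrt lam))) := by
  classical
  set A : ℕ → ℝ := fun n => Real.sqrt ((1 - ρ n) * Real.log n) with hAdef
  set B : ℕ → ℝ := fun n => Real.sqrt (1 + ρ n) with hBdef
  set c : ℕ → ℝ := fun n => Real.log (Real.log n) + Real.log (4 * Real.pi) with hcdef
  have hsl : (0:ℝ) < Real.sqrt lam := Real.sqrt_pos.mpr hlam
  have hs2 : (0:ℝ) < Real.sqrt 2 := Real.sqrt_pos.mpr (by norm_num)
  have hlogtop : Filter.Tendsto (fun n : ℕ => Real.log n) Filter.atTop Filter.atTop :=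
    Real.tendsto_log_atTop.comp tendsto_natCast_atTop_atTop
  have hA : Filter.Tendsto A Filter.atTop (nhds (Real.sqrt lam)) := hHR.sqrt
  have hB : Filter.Tendsto B Filter.atTop (nhds (Real.sqrt 2)) := by
    have h2 : Filter.Tendsto (fun n => 1 + ρ n) Filter.atTop (nhds (2:ℝ)) := by
      have := (tendsto_const_nhds (x := (1:ℝ)) (f := Filter.atTop (α := ℕ))).add hρ1
      norm_num at this
      exact this
    exact h2.sqrt
  have hc : Filter.Tendsto (fun n => c n / Real.log n) Filter.atTop (nhds 0) := by
    have h1 : Filter.Tendsto (fun z : ℝ => Real.log z / z) Filter.atTop (nhds 0) :=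
      Real.isLittleO_log_id_atTop.tendsto_div_nhds_zero
    have h1' := h1.comp hlogtop
    have h2 : Filter.Tendsto (fun n : ℕ => Real.log (4 * Real.pi) / Real.log n)
        Filter.atTop (nhds 0) := tendsto_const_nhds.div_atTop hlogtop
    have := h1'.add h2
    norm_num at this
    simpa [hcdef, add_div] using this
  -- the limit of the reorganized expression
  have key : Filter.Tendsto
      (fun n : ℕ => (y - ρ n * x) / (Real.sqrt 2 * A n * B n) + Real.sqrt 2 * A n / B n
        - A n * (c n / Real.log n) / (2 * Real.sqrt 2 * B n)) Filter.atTop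
      (nhds ((y - 1 * x) / (Real.sqrt 2 * Real.sqrt lam * Real.sqrt 2)
        + Real.sqrt 2 * Real.sqrt lam / Real.sqrt 2
        - Real.sqrt lam * 0 / (2 * Real.sqrt 2 * Real.sqrt 2))) := by
    have t1 : Filter.Tendsto (fun n : ℕ => (y - ρ n * x) / (Real.sqrt 2 * A n * B n))
        Filter.atTop (nhds ((y - 1 * x) / (Real.sqrt 2 * Real.sqrt lam * Real.sqrt 2))) := by
      refine Filter.Tendsto.div (tendsto_const_nhds.sub (hρ1.mul_const x))
        (((tendsto_const_nhds).mul hA).mul hB) (by positivity)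
    have t2 : Filter.Tendsto (fun n : ℕ => Real.sqrt 2 * A n / B n) Filter.atTop
        (nhds (Real.sqrt 2 * Real.sqrt lam / Real.sqrt 2)) :=
      Filter.Tendsto.div (tendsto_const_nhds.mul hA) hB (by positivity)
    have t3 : Filter.Tendsto (fun n : ℕ => A n * (c n / Real.log n) / (2 * Real.sqrt 2 * B n))
        Filter.atTop (nhds (Real.sqrt lam * 0 / (2 * Real.sqrt 2 * Real.sqrt 2))) :=
      Filter.Tendsto.div (hA.mul hc) (tendsto_const_nhds.mul hB) (by positivity)
    exact (t1.add t2).sub t3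
  have hV : (y - 1 * x) / (Real.sqrt 2 * Real.sqrt lam * Real.sqrt 2)
      + Real.sqrt 2 * Real.sqrt lam / Real.sqrt 2
      - Real.sqrt lam * 0 / (2 * Real.sqrt 2 * Real.sqrt 2)
      = Real.sqrt lam + (y - x) / (2 * Real.sqrt lam) := by
    have h22 : Real.sqrt 2 * Real.sqrt 2 = 2 := Real.mul_self_sqrt (by norm_num)
    field_simp
    linear_combination (-(y - x)) * h22
  rw [← hV]
  refine key.congr' ?_
  -- eventual equality
  have e1 : ∀ᶠ n : ℕ in Filter.atTop, 1 < Real.log n := hlogtop.eventually_gt_atTop 1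
  have e2 : ∀ᶠ n : ℕ in Filter.atTop, lam / 2 < (1 - ρ n) * Real.log n :=
    hHR.eventually (eventually_gt_nhds (by linarith))
  have e3 : ∀ᶠ n : ℕ in Filter.atTop, (0:ℝ) < ρ n :=
    hρ1.eventually (eventually_gt_nhds (by norm_num))
  filter_upwards [e1, e2, e3] with n hlog hl2 hρpos
  have hL : (0:ℝ) < Real.log n := by linarith
  have h1ρ : (0:ℝ) < 1 - ρ n := by nlinarith
  have h1ρ' : (0:ℝ) < 1 + ρ n := by linarith
  set t := Real.sqrt (Real.log n) with htdef
  set a := Real.sqrt (1 - ρ n) with hadef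
  set b := Real.sqrt (1 + ρ n) with hbdef
  have ht : 0 < t := Real.sqrt_pos.mpr hL
  have ha : 0 < a := Real.sqrt_pos.mpr h1ρ
  have hb : 0 < b := Real.sqrt_pos.mpr h1ρ'
  have ht2 : t ^ 2 = Real.log n := Real.sq_sqrt hL.le
  have ha2 : a ^ 2 = 1 - ρ n := Real.sq_sqrt h1ρ.le
  have hrt : Real.sqrt (2 * Real.log n) = Real.sqrt 2 * t :=
    Real.sqrt_mul (by norm_num) _
  have hAn : A n = a * t := Real.sqrt_mul h1ρ.le _
  have hBn : B n = b := rfl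
  have hab : Real.sqrt (1 - ρ n ^ 2) = a * b := by
    rw [show (1 - ρ n ^ 2) = (1 - ρ n) * (1 + ρ n) by ring, Real.sqrt_mul h1ρ.le]
  have hρeq : ρ n = 1 - a ^ 2 := by linarith
  simp only [hAn, hBn, un, hab, hrt, hcdef]
  set C := Real.log (Real.log (n:ℝ)) with hCdef
  simp only [← ht2]
  rw [hρeq]
  have hs2' : Real.sqrt 2 ≠ 0 := hs2.ne'
  field_simp
  ring
end
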